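/- If y_i(⟪w, x_i⟫ + b) ≥ 1 for all i with w ≠ 0, then every data point x_i has distance at least 1/‖w‖ from the hyperplane {x : ⟪w, x⟫ + b = 0}. -/

import Mathlib

open RealInnerProductSpace

theorem svm_geometric_margin_bound {n N : ℕ}
    (x : Fin N → EuclideanSpace ℝ (Fin n)) (y : Fin N → ℝ)
    (hy : ∀ i, y i = 1 ∨ y i = -1)
    (w : EuclideanSpace ℝ (Fin n)) (hw : w ≠ 0) (b : ℝ)
    (hfeas : ∀ i, y i * (⟪w, x i⟫ + b) ≥ 1) (i : Fin N) :
    Metric.infDist (x i) {z : EuclideanSpace ℝ (Fin n) | ⟪w, z⟫ + b = 0} ≥ 1 / ‖w‖ := by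
  have hwn : (0:ℝ) < ‖w‖ := norm_pos_iff.mpr hw
  have hne : ({z : EuclideanSpace ℝ (Fin n) | ⟪w, z⟫ + b = 0}).Nonempty := by
    refine ⟨(-b / ‖w‖^2) • w, ?_⟩
    simp only [Set.mem_setOf_eq, real_inner_smul_right, real_inner_self_eq_norm_sq]
    field_simp
    ring
  refine le_of_not_gt fun hlt => ?_
  obtain ⟨z, hz, hd⟩ := (Metric.infDist_lt_iff hne).mp hlt
  have hz' : ⟪w, z⟫ + b = 0 := hz
  have h1 : |⟪w, x i⟫ + b| ≥ 1 := by
    rcases hy i with h | h <;> have := hfeas i <;> rw [h] at this <;>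
      cases abs_cases (⟪w, x i⟫ + b) <;> linarith
  have h2 : ⟪w, x i - z⟫ = ⟪w, x i⟫ + b := by
    rw [inner_sub_right]; linarith
  have h3 : |⟪w, x i - z⟫| ≤ ‖w‖ * ‖x i - z‖ := abs_real_inner_le_norm w _
  rw [dist_eq_norm] at hd
  rw [lt_div_iff₀ hwn] at hd
  rw [h2] at h3
  nlinarith
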